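/- arXiv:1811.11557 — 2 statements merged into one kernel-verified Lean document; each statement's English description precedes it below -/
import Mathlib

section
/- Let Y have the Student-t distribution with ν > 2 degrees of freedom, cdf F_ν and pdf f_ν(x) = Γ((ν+1)/2)/(√(νπ)Γ(ν/2)) · (1 + x²/ν)^{-(ν+1)/2}, and let σ_ν = √((ν-2)/ν). Then for any b ∈ ℝ, E[Y·1_{Y<b}] = -f_{ν-2}(σ_ν b)/σ_ν, i.e. E[Y | Y < b] = -f_{ν-2}(σ_ν b)/(σ_ν F_ν(b)). -/
open MeasureTheory Set Real Filter Topology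

/-- Student-t density with `ν` degrees of freedom. -/
noncomputable def studentPdf (ν x : ℝ) : ℝ :=
  Real.Gamma ((ν + 1) / 2) / (Real.sqrt (ν * π) * Real.Gamma (ν / 2)) *
    (1 + x ^ 2 / ν) ^ (-((ν + 1) / 2))

/-- Student-t cdf with `ν` degrees of freedom. -/
noncomputable def studentCdf (ν b : ℝ) : ℝ := ∫ x in Iic b, studentPdf ν x

lemma studentAux_base_pos {ν : ℝ} (hν : 0 < ν) (x : ℝ) : 0 < 1 + x ^ 2 / ν := by
  have : 0 ≤ x ^ 2 / ν := div_nonneg (sq_nonneg x) hν.le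
  linarith

lemma studentAux_integrable (ν : ℝ) (hν : 2 < ν) :
    Integrable (fun x : ℝ => x * studentPdf ν x) := by
  have hν0 : (0:ℝ) < ν := by linarith
  set c : ℝ := Real.Gamma ((ν + 1) / 2) / (Real.sqrt (ν * π) * Real.Gamma (ν / 2)) with hc
  have hc0 : 0 ≤ c := by
    apply div_nonneg (Real.Gamma_nonneg_of_nonneg (by linarith))
    exact mul_nonneg (Real.sqrt_nonneg _) (Real.Gamma_nonneg_of_nonneg (by linarith))
  have hg : Integrable (fun x : ℝ => (c * ν ^ ((ν + 1) / 2)) * ((1 + ‖x‖ ^ 2) ^ (-ν / 2))) := by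
    refine (integrable_rpow_neg_one_add_norm_sq (E := ℝ) ?_).const_mul _
    simpa using (by linarith : (1:ℝ) < ν)
  refine hg.mono' ?_ (Filter.Eventually.of_forall fun x => ?_)
  · apply Continuous.aestronglyMeasurable
    refine continuous_id.mul (continuous_const.mul ?_)
    refine Continuous.rpow_const ?_ fun x => Or.inl (ne_of_gt (studentAux_base_pos hν0 x))
    exact continuous_const.add ((continuous_pow 2).div_const ν)
  · have hB : (0:ℝ) < 1 + x ^ 2 := by positivity
    have h1 : (1 + x ^ 2 / ν) ^ (-((ν + 1) / 2))
        ≤ ν ^ ((ν + 1) / 2) * (1 + x ^ 2) ^ (-((ν + 1) / 2)) := by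
      have hle : (1 + x ^ 2) / ν ≤ 1 + x ^ 2 / ν := by
        rw [div_le_iff₀ hν0]
        have hx : (1 + x ^ 2 / ν) * ν = ν + x ^ 2 := by field_simp
        rw [hx]; linarith
      have := Real.rpow_le_rpow_of_nonpos (div_pos hB hν0) hle (by linarith : -((ν + 1) / 2) ≤ 0)
      calc (1 + x ^ 2 / ν) ^ (-((ν + 1) / 2)) ≤ ((1 + x ^ 2) / ν) ^ (-((ν + 1) / 2)) := this
        _ = ν ^ ((ν + 1) / 2) * (1 + x ^ 2) ^ (-((ν + 1) / 2)) := by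
            rw [Real.div_rpow hB.le hν0.le, div_eq_mul_inv, ← Real.rpow_neg hν0.le, neg_neg,
              mul_comm]
    have h2 : |x| ≤ (1 + x ^ 2) ^ ((1:ℝ) / 2) := by
      rw [← Real.sqrt_eq_rpow, ← Real.sqrt_sq_eq_abs]
      exact Real.sqrt_le_sqrt (by nlinarith)
    have hA0 : (0:ℝ) ≤ (1 + x ^ 2 / ν) ^ (-((ν + 1) / 2)) :=
      Real.rpow_nonneg (studentAux_base_pos hν0 x).le _
    calc ‖x * studentPdf ν x‖ = |x| * (c * (1 + x ^ 2 / ν) ^ (-((ν + 1) / 2))) := by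
          rw [norm_mul, Real.norm_eq_abs, Real.norm_eq_abs, studentPdf, ← hc,
            abs_of_nonneg (mul_nonneg hc0 hA0)]
      _ = c * (|x| * (1 + x ^ 2 / ν) ^ (-((ν + 1) / 2))) := by ring
      _ ≤ c * ((1 + x ^ 2) ^ ((1:ℝ) / 2) * (ν ^ ((ν + 1) / 2) * (1 + x ^ 2) ^ (-((ν + 1) / 2)))) := by
          refine mul_le_mul_of_nonneg_left (mul_le_mul h2 h1 hA0 ?_) hc0
          exact Real.rpow_nonneg hB.le _
      _ = (c * ν ^ ((ν + 1) / 2)) * ((1 + x ^ 2) ^ ((1:ℝ) / 2) * (1 + x ^ 2) ^ (-((ν + 1) / 2))) := by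
          ring
      _ = (c * ν ^ ((ν + 1) / 2)) * ((1 + ‖x‖ ^ 2) ^ (-ν / 2)) := by
          rw [← Real.rpow_add hB]
          have he : (1:ℝ) / 2 + -((ν + 1) / 2) = -ν / 2 := by ring
          rw [he]
          simp [Real.norm_eq_abs, sq_abs]

/-- For `Y` Student-t with `ν > 2` degrees of freedom and
`σ_ν = √((ν-2)/ν)`, for any `b : ℝ`,
`E[Y·1_{Y<b}] = -f_{ν-2}(σ_ν b)/σ_ν`, i.e. `E[Y | Y < b] = -f_{ν-2}(σ_ν b)/(σ_ν F_ν(b))`. -/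
theorem studentT_truncated_first_moment (ν : ℝ) (hν : 2 < ν) (b : ℝ) :
    (∫ x in Iic b, x * studentPdf ν x)
        = -(studentPdf (ν - 2) (Real.sqrt ((ν - 2) / ν) * b)) / Real.sqrt ((ν - 2) / ν) ∧
    (∫ x in Iic b, x * studentPdf ν x) / studentCdf ν b
        = -(studentPdf (ν - 2) (Real.sqrt ((ν - 2) / ν) * b))
            / (Real.sqrt ((ν - 2) / ν) * studentCdf ν b) := by
  have hν0 : (0:ℝ) < ν := by linarith
  have hν2 : (0:ℝ) < ν - 2 := by linarith
  have hν1 : (0:ℝ) < ν - 1 := by linarith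
  set c : ℝ := Real.Gamma ((ν + 1) / 2) / (Real.sqrt (ν * π) * Real.Gamma (ν / 2)) with hc
  set k : ℝ := c * ν / (ν - 1) with hk
  set F : ℝ → ℝ := fun x => -k * (1 + x ^ 2 / ν) ^ (-((ν - 1) / 2)) with hF
  have hderiv : ∀ x : ℝ, HasDerivAt F (x * studentPdf ν x) x := by
    intro x
    have h1 : HasDerivAt (fun x : ℝ => 1 + x ^ 2 / ν) (2 * x / ν) x := by
      simpa using ((hasDerivAt_pow 2 x).div_const ν).const_add 1
    have h2 := h1.rpow_const (p := -((ν - 1) / 2))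
      (Or.inl (ne_of_gt (studentAux_base_pos hν0 x)))
    have h3 := h2.const_mul (-k)
    refine h3.congr_deriv ?_
    symm
    have he : -((ν - 1) / 2) - 1 = -((ν + 1) / 2) := by ring
    rw [he, studentPdf, ← hc, hk]
    field_simp
  have htends : Tendsto F atBot (𝓝 0) := by
    have hsq : Tendsto (fun x : ℝ => x ^ 2) atBot atTop := by
      have := Filter.Tendsto.atBot_mul_atBot₀
        (tendsto_id (x := (atBot : Filter ℝ))) (tendsto_id (x := (atBot : Filter ℝ)))
      simpa [sq] using this
    have hbase : Tendsto (fun x : ℝ => 1 + x ^ 2 / ν) atBot atTop :=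
      tendsto_atTop_add_const_left _ _ (hsq.atTop_div_const hν0)
    have hr : Tendsto (fun y : ℝ => y ^ (-((ν - 1) / 2))) atTop (𝓝 0) :=
      tendsto_rpow_neg_atTop (by linarith)
    have := (hr.comp hbase).const_mul (-k)
    simpa [hF, neg_mul] using this
  have hint := (studentAux_integrable ν hν).integrableOn (s := Iic b)
  have key : ∫ x in Iic b, x * studentPdf ν x = F b - 0 :=
    integral_Iic_of_hasDerivAt_of_tendsto' (fun x _ => hderiv x) hint htends
  rw [sub_zero] at key
  set σ : ℝ := Real.sqrt ((ν - 2) / ν) with hσ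
  have hσpos : 0 < σ := Real.sqrt_pos.mpr (div_pos hν2 hν0)
  have hσsq : σ ^ 2 = (ν - 2) / ν := Real.sq_sqrt (div_pos hν2 hν0).le
  have hσeq : σ = Real.sqrt (ν - 2) / Real.sqrt ν := by
    rw [hσ, Real.sqrt_div hν2.le]
  have harg : (σ * b) ^ 2 / (ν - 2) = b ^ 2 / ν := by
    rw [mul_pow, hσsq]
    field_simp
  have hmain : F b = -(studentPdf (ν - 2) (σ * b)) / σ := by
    rw [hF, studentPdf, harg]
    have he1 : (ν - 2 + 1) / 2 = (ν - 1) / 2 := by ring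
    rw [he1]
    have hg1 : Real.Gamma ((ν + 1) / 2) = (ν - 1) / 2 * Real.Gamma ((ν - 1) / 2) := by
      have : (ν + 1) / 2 = (ν - 1) / 2 + 1 := by ring
      rw [this, Real.Gamma_add_one (by positivity)]
    have hg2 : Real.Gamma (ν / 2) = (ν - 2) / 2 * Real.Gamma ((ν - 2) / 2) := by
      have : ν / 2 = (ν - 2) / 2 + 1 := by ring
      rw [this, Real.Gamma_add_one (by positivity)]
    have hG2pos : 0 < Real.Gamma ((ν - 2) / 2) := Real.Gamma_pos_of_pos (by positivity)
    have hG1pos : 0 < Real.Gamma ((ν - 1) / 2) := Real.Gamma_pos_of_pos (by positivity)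
    have hsπ : 0 < Real.sqrt π := Real.sqrt_pos.mpr Real.pi_pos
    have hsν : 0 < Real.sqrt ν := Real.sqrt_pos.mpr hν0
    have hsν2 : 0 < Real.sqrt (ν - 2) := Real.sqrt_pos.mpr hν2
    have hm1 : Real.sqrt (ν * π) = Real.sqrt ν * Real.sqrt π := Real.sqrt_mul hν0.le _
    have hm2 : Real.sqrt ((ν - 2) * π) = Real.sqrt (ν - 2) * Real.sqrt π :=
      Real.sqrt_mul hν2.le _
    have hs1 : Real.sqrt ν * Real.sqrt ν = ν := Real.mul_self_sqrt hν0.le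
    have hs2 : Real.sqrt (ν - 2) * Real.sqrt (ν - 2) = ν - 2 := Real.mul_self_sqrt hν2.le
    rw [hk, hc, hg1, hg2, hm1, hm2, hσeq]
    have hA0 : (0:ℝ) < (1 + b ^ 2 / ν) ^ (-((ν - 1) / 2)) :=
      Real.rpow_pos_of_pos (studentAux_base_pos hν0 b) _
    field_simp
    ring_nf
    rw [Real.sq_sqrt hν0.le, Real.sq_sqrt (by linarith : (0:ℝ) ≤ -2 + ν)]
    ring
  constructor
  · rw [key, hmain]
  · rw [key, hmain, div_div]
end

section
/- Let Y have the Student-t distribution with ν > 3 degrees of freedom. Then for any b ∈ ℝ, E[Y³ | Y < b] = (2(ν + b²)/(ν-3) + b²) · E[Y | Y < b]. -/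
open MeasureTheory Set Real

open Filter

lemma integrableOn_abs_rpow_Iic {a : ℝ} (ha : a < -1) :
    IntegrableOn (fun x : ℝ => |x| ^ a) (Iic (-1 : ℝ)) := by
  have hemb : MeasurableEmbedding (fun x : ℝ => -x) :=
    (Homeomorph.neg ℝ).isClosedEmbedding.measurableEmbedding
  have h1 : IntegrableOn (fun x : ℝ => x ^ a) (Ioi (1 : ℝ)) :=
    integrableOn_Ioi_rpow_of_lt ha one_pos
  have h2 : IntegrableOn (fun x : ℝ => |(-x)| ^ a) (Ici (1 : ℝ)) := by
    rw [integrableOn_Ici_iff_integrableOn_Ioi]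
    exact h1.congr_fun (fun x hx => by
      rw [abs_neg, abs_of_pos (lt_trans one_pos hx)]) measurableSet_Ioi
  have hpre : (fun x : ℝ => -x) ⁻¹' (Iic (-1 : ℝ)) = Ici (1 : ℝ) := by
    ext x; simp [le_neg]
  have hmap : Measure.map (fun x : ℝ => -x) (volume.restrict (Ici (1 : ℝ)))
      = volume.restrict (Iic (-1 : ℝ)) := by
    have h := hemb.restrict_map (volume : Measure ℝ) (Iic (-1 : ℝ))
    rw [Measure.map_neg_eq_self (volume : Measure ℝ), hpre] at h
    exact h.symm
  rw [IntegrableOn, ← hmap, hemb.integrable_map_iff]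
  exact h2

lemma aux_integrable (ν : ℝ) (hν0 : 0 < ν) {p : ℝ} (hp : p ≤ 0) (n : ℕ)
    (h : (n : ℝ) + 2 * p < -1) (b : ℝ) :
    IntegrableOn (fun x : ℝ => x ^ n * (1 + x ^ 2 / ν) ^ p) (Iic b) := by
  have hupos : ∀ x : ℝ, 0 < 1 + x ^ 2 / ν := fun x =>
    add_pos_of_pos_of_nonneg one_pos (div_nonneg (sq_nonneg x) hν0.le)
  have hcont : Continuous fun x : ℝ => x ^ n * (1 + x ^ 2 / ν) ^ p := by
    apply (continuous_pow n).mul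
    apply Continuous.rpow_const
    · continuity
    · intro x; exact Or.inl (hupos x).ne'
  have hsub : Iic b ⊆ Iic (-1) ∪ Icc (-1) b := by
    intro x hx
    rcases le_or_gt x (-1) with h' | h'
    · exact Or.inl h'
    · exact Or.inr ⟨h'.le, hx⟩
  refine IntegrableOn.mono_set (IntegrableOn.union ?_ hcont.integrableOn_Icc) hsub
  have hg : IntegrableOn (fun x : ℝ => ν ^ (-p) * |x| ^ ((n : ℝ) + 2 * p)) (Iic (-1 : ℝ)) :=
    (integrableOn_abs_rpow_Iic h).const_mul _
  apply Integrable.mono' hg hcont.aestronglyMeasurable.restrict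
  filter_upwards [ae_restrict_mem measurableSet_Iic] with x hx
  have hxneg : x < 0 := lt_of_le_of_lt hx.out (by norm_num)
  have hx1 : (1 : ℝ) ≤ |x| := by
    rw [abs_of_neg hxneg]; linarith [hx.out]
  have hxpos : (0 : ℝ) < |x| := lt_of_lt_of_le one_pos hx1
  have hub : (1 + x ^ 2 / ν) ^ p ≤ (x ^ 2 / ν) ^ p := by
    apply Real.rpow_le_rpow_of_nonpos _ (by linarith) hp
    exact div_pos ((sq_abs x) ▸ pow_pos hxpos 2) hν0
  have hx2 : x ^ 2 = |x| ^ (2 : ℝ) := by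
    rw [show ((2:ℝ)) = ((2:ℕ):ℝ) by norm_num, Real.rpow_natCast, sq_abs]
  calc ‖x ^ n * (1 + x ^ 2 / ν) ^ p‖
      = |x| ^ n * (1 + x ^ 2 / ν) ^ p := by
        rw [norm_mul, norm_pow, Real.norm_eq_abs, Real.norm_eq_abs,
          abs_of_pos (Real.rpow_pos_of_pos (hupos x) p)]
    _ ≤ |x| ^ n * (x ^ 2 / ν) ^ p :=
        mul_le_mul_of_nonneg_left hub (pow_nonneg (abs_nonneg x) n)
    _ = ν ^ (-p) * |x| ^ ((n : ℝ) + 2 * p) := by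
        rw [Real.div_rpow (sq_nonneg x) hν0.le, hx2, ← Real.rpow_natCast |x| n,
          ← Real.rpow_mul (abs_nonneg x), Real.rpow_add hxpos, Real.rpow_neg hν0.le]
        ring

lemma aux_deriv (ν : ℝ) (hν0 : 0 < ν) (r : ℝ) (x : ℝ) :
    HasDerivAt (fun x : ℝ => (1 + x ^ 2 / ν) ^ r)
      (r * (2 * x / ν) * (1 + x ^ 2 / ν) ^ (r - 1)) x := by
  have hu : (0 : ℝ) < 1 + x ^ 2 / ν :=
    add_pos_of_pos_of_nonneg one_pos (div_nonneg (sq_nonneg x) hν0.le)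
  have h : HasDerivAt (fun x : ℝ => 1 + x ^ 2 / ν) (2 * x / ν) x := by
    have h0 := ((hasDerivAt_pow 2 x).div_const ν).const_add (1 : ℝ)
    norm_num at h0 ⊢
    exact h0
  have h2 := h.rpow_const (p := r) (Or.inl hu.ne')
  convert h2 using 1
  ring

lemma aux_tendsto (ν : ℝ) (hν0 : 0 < ν) {r : ℝ} (hr : r < 0) :
    Tendsto (fun x : ℝ => (1 + x ^ 2 / ν) ^ r) atBot (nhds 0) := by
  have hsq : Tendsto (fun x : ℝ => x ^ 2) atBot atTop := by
    refine tendsto_atTop.2 fun c => ?_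
    filter_upwards [eventually_le_atBot (-(|c| + 1))] with x hx
    nlinarith [le_abs_self c, abs_nonneg c, sq_nonneg (x + |c| + 1)]
  have h1 : Tendsto (fun x : ℝ => 1 + x ^ 2 / ν) atBot atTop :=
    tendsto_atTop_add_const_left _ _ (hsq.atTop_div_const hν0)
  have h2 : Tendsto (fun y : ℝ => y ^ r) atTop (nhds 0) := by
    have := tendsto_rpow_neg_atTop (neg_pos.mpr hr)
    simpa using this
  exact h2.comp h1


/-- For `Y` Student-t with `ν > 3` degrees of freedom, for any `b : ℝ`,
`E[Y³ | Y < b] = (2(ν + b²)/(ν-3) + b²) · E[Y | Y < b]`, with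
`E[Y^m | Y < b] = ∫_{-∞}^b x^m f_ν / F_ν(b)`. -/
theorem studentT_truncated_third_moment (ν : ℝ) (hν : 3 < ν) (b : ℝ) :
    (∫ x in Iic b, x ^ 3 * studentPdf ν x) / studentCdf ν b
      = (2 * (ν + b ^ 2) / (ν - 3) + b ^ 2) *
          ((∫ x in Iic b, x * studentPdf ν x) / studentCdf ν b) := by
  have hν0 : (0 : ℝ) < ν := by linarith
  have h1ν : (1 : ℝ) - ν ≠ 0 := by intro h; linarith
  have h3ν : (3 : ℝ) - ν ≠ 0 := by intro h; linarith
  have hν3 : ν - (3 : ℝ) ≠ 0 := by intro h; linarith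
  set p : ℝ := -((ν + 1) / 2) with hp_def
  have hp : p ≤ 0 := by rw [hp_def]; linarith
  have hupos : ∀ x : ℝ, 0 < 1 + x ^ 2 / ν := fun x =>
    add_pos_of_pos_of_nonneg one_pos (div_nonneg (sq_nonneg x) hν0.le)
  set C : ℝ := Real.Gamma ((ν + 1) / 2) / (Real.sqrt (ν * π) * Real.Gamma (ν / 2)) with hC
  set ub : ℝ := 1 + b ^ 2 / ν with hub_def
  have hub : (0 : ℝ) < ub := hupos b
  set t : ℝ := ub ^ ((1 - ν) / 2) with ht
  have hI1 : ∫ x in Iic b, x * (1 + x ^ 2 / ν) ^ p = ν / (1 - ν) * t := by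
    have hint : IntegrableOn (fun x : ℝ => x * (1 + x ^ 2 / ν) ^ p) (Iic b) := by
      have := aux_integrable ν hν0 hp 1 (by push_cast; rw [hp_def]; linarith) b
      simpa using this
    have hd : ∀ x ∈ Iic b, HasDerivAt (fun x : ℝ => ν / (1 - ν) * (1 + x ^ 2 / ν) ^ ((1 - ν) / 2))
        (x * (1 + x ^ 2 / ν) ^ p) x := by
      intro x _
      have h := (aux_deriv ν hν0 ((1 - ν) / 2) x).const_mul (ν / (1 - ν))
      refine h.congr_deriv ?_
      rw [show (1 - ν) / 2 - 1 = p by rw [hp_def]; ring]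
      generalize (1 + x ^ 2 / ν) ^ p = A
      field_simp
    have htend : Tendsto (fun x : ℝ => ν / (1 - ν) * (1 + x ^ 2 / ν) ^ ((1 - ν) / 2))
        atBot (nhds 0) := by
      have := (aux_tendsto ν hν0 (show (1 - ν) / 2 < 0 by linarith)).const_mul (ν / (1 - ν))
      simpa using this
    have := integral_Iic_of_hasDerivAt_of_tendsto' hd hint htend
    rw [this, sub_zero]
  have hI3 : ∫ x in Iic b, x ^ 3 * (1 + x ^ 2 / ν) ^ p
      = ν ^ 2 / (3 - ν) * (ub * t) - ν ^ 2 / (1 - ν) * t := by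
    have hint : IntegrableOn (fun x : ℝ => x ^ 3 * (1 + x ^ 2 / ν) ^ p) (Iic b) :=
      aux_integrable ν hν0 hp 3 (by push_cast; rw [hp_def]; linarith) b
    have hd : ∀ x ∈ Iic b, HasDerivAt (fun x : ℝ =>
        ν ^ 2 / (3 - ν) * (1 + x ^ 2 / ν) ^ ((3 - ν) / 2)
          - ν ^ 2 / (1 - ν) * (1 + x ^ 2 / ν) ^ ((1 - ν) / 2))
        (x ^ 3 * (1 + x ^ 2 / ν) ^ p) x := by
      intro x _
      have h1 := (aux_deriv ν hν0 ((3 - ν) / 2) x).const_mul (ν ^ 2 / (3 - ν))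
      have h2 := (aux_deriv ν hν0 ((1 - ν) / 2) x).const_mul (ν ^ 2 / (1 - ν))
      have h := h1.sub h2
      refine h.congr_deriv ?_
      rw [show (3 - ν) / 2 - 1 = (1 - ν) / 2 by ring,
        show (1 - ν) / 2 - 1 = p by rw [hp_def]; ring,
        show (1 - ν) / 2 = 1 + p by rw [hp_def]; ring,
        Real.rpow_add (hupos x), Real.rpow_one]
      generalize (1 + x ^ 2 / ν) ^ p = A
      field_simp
      ring
    have htend : Tendsto (fun x : ℝ =>
        ν ^ 2 / (3 - ν) * (1 + x ^ 2 / ν) ^ ((3 - ν) / 2)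
          - ν ^ 2 / (1 - ν) * (1 + x ^ 2 / ν) ^ ((1 - ν) / 2)) atBot (nhds 0) := by
      have h1 := (aux_tendsto ν hν0 (show (3 - ν) / 2 < 0 by linarith)).const_mul (ν ^ 2 / (3 - ν))
      have h2 := (aux_tendsto ν hν0 (show (1 - ν) / 2 < 0 by linarith)).const_mul (ν ^ 2 / (1 - ν))
      have := h1.sub h2
      simpa using this
    have heq := integral_Iic_of_hasDerivAt_of_tendsto' hd hint htend
    have hsplit : (1 + b ^ 2 / ν) ^ ((3 - ν) / 2) = ub * t := by
      rw [ht, hub_def, show (3 - ν) / 2 = 1 + (1 - ν) / 2 by ring,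
        Real.rpow_add (hupos b), Real.rpow_one]
    rw [heq, sub_zero, hsplit]
  have e1 : ∫ x in Iic b, x * studentPdf ν x = C * ∫ x in Iic b, x * (1 + x ^ 2 / ν) ^ p := by
    rw [← integral_const_mul]
    simp_rw [studentPdf, ← hp_def, ← hC, mul_left_comm]
  have e3 : ∫ x in Iic b, x ^ 3 * studentPdf ν x
      = C * ∫ x in Iic b, x ^ 3 * (1 + x ^ 2 / ν) ^ p := by
    rw [← integral_const_mul]
    simp_rw [studentPdf, ← hp_def, ← hC, mul_left_comm]
  have key : C * (ν ^ 2 / (3 - ν) * (ub * t) - ν ^ 2 / (1 - ν) * t)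
      = (2 * (ν + b ^ 2) / (ν - 3) + b ^ 2) * (C * (ν / (1 - ν) * t)) := by
    rw [hub_def]
    field_simp
    ring
  rw [e1, e3, hI1, hI3, key, mul_div_assoc]
end
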